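/- Let n ≥ 1 be a fixed integer, let δ > 0, let b_1,…,b_n ≥ 0, and for real α define φ_n(α) = ∏_{k=1}^n ((1 + e^{-(δ+2πiα)k})/(1 + e^{-δk}))^{b_k} (moduli of the base taken, i.e. consider |φ_n(α)|). Then |φ_n(α)| ≤ exp(-(1/2) ∑_{k=1}^n b_k e^{-kδ} sin²(π α k)). -/

import Mathlib

set_option maxHeartbeats 1000000
open Real Complex

lemma key_factor (δ : ℝ) (hδ : 0 < δ) (α : ℝ) (k : ℕ) (hk : 1 ≤ k) :
    ‖1 + Complex.exp (-(↑δ + 2 * ↑π * I * ↑α) * k)‖ / (1 + Real.exp (-δ * k)) ≤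
      Real.exp (-(1/2) * (Real.exp (-(k:ℝ) * δ) * Real.sin (π * α * k) ^ 2)) := by
  set t : ℝ := Real.exp (-δ * k) with ht
  set s : ℝ := Real.sin (π * α * k) ^ 2 with hs
  have htt : Real.exp (-(k:ℝ) * δ) = t := by rw [ht]; ring_nf
  rw [htt]
  have ht0 : 0 < t := Real.exp_pos _
  have ht1 : t < 1 := by
    rw [ht]
    apply Real.exp_lt_one_iff.mpr
    have : (0:ℝ) < (k:ℝ) := by exact_mod_cast hk
    nlinarith
  have hs0 : 0 ≤ s := sq_nonneg _
  set θ : ℝ := -(2 * π * α * k) with hθ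
  have hz : (-(↑δ + 2 * ↑π * I * ↑α) * k : ℂ) =
      (↑(-δ * k) : ℂ) + ↑θ * I := by rw [hθ]; push_cast; ring
  have hexp : Complex.exp (-(↑δ + 2 * ↑π * I * ↑α) * k) =
      (↑t : ℂ) * (↑(Real.cos θ) + ↑(Real.sin θ) * I) := by
    rw [hz, Complex.exp_add, Complex.exp_mul_I, ← Complex.ofReal_exp,
      ← Complex.ofReal_cos, ← Complex.ofReal_sin, ht]
  have habs2 : ‖1 + Complex.exp (-(↑δ + 2 * ↑π * I * ↑α) * k)‖ ^ 2 =
      (1 + t * Real.cos θ) ^ 2 + (t * Real.sin θ) ^ 2 := by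
    rw [hexp, Complex.sq_norm]
    simp [Complex.normSq_apply, Complex.cos_ofReal_re, Complex.sin_ofReal_re]
    ring
  have hcos : Real.cos θ = 1 - 2 * s := by
    rw [hθ, Real.cos_neg, show (2 * π * α * (k:ℝ)) = 2 * (π * α * k) by ring,
      Real.cos_two_mul']
    nlinarith [Real.sin_sq_add_cos_sq (π * α * (k:ℝ))]
  have key2 : (1 + t * Real.cos θ) ^ 2 + (t * Real.sin θ) ^ 2 =
      (1 + t) ^ 2 - 4 * t * s := by
    linear_combination 2 * t * hcos + t ^ 2 * (Real.sin_sq_add_cos_sq θ)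
  rw [div_le_iff₀ (by positivity)]
  have hE2 : Real.exp (-(1/2) * (t * s)) ^ 2 = Real.exp (-(t * s)) := by
    rw [sq, ← Real.exp_add]; congr 1; ring
  have hlin : 1 - t * s ≤ Real.exp (-(t * s)) := by
    have := Real.add_one_le_exp (-(t * s)); linarith
  have hgoal2 : ‖1 + Complex.exp (-(↑δ + 2 * ↑π * I * ↑α) * k)‖ ^ 2 ≤
      (Real.exp (-(1/2) * (t * s)) * (1 + t)) ^ 2 := by
    rw [habs2, key2, mul_pow, hE2]
    have hA : (1 - t * s) * (1 + t) ^ 2 ≤ Real.exp (-(t * s)) * (1 + t) ^ 2 :=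
      mul_le_mul_of_nonneg_right hlin (by positivity)
    have hfac : (0:ℝ) ≤ (t * s) * ((1 - t) * (t + 3)) :=
      mul_nonneg (mul_nonneg ht0.le hs0) (by nlinarith)
    have h4 : t * s * (1 + t) ^ 2 ≤ 4 * (t * s) := by nlinarith [hfac]
    nlinarith [hA, h4]
  have hy : (0:ℝ) ≤ Real.exp (-(1/2) * (t * s)) * (1 + t) := by positivity
  nlinarith [norm_nonneg (1 + Complex.exp (-(↑δ + 2 * ↑π * I * ↑α) * k)), hgoal2, hy]

/-- Selections case of Lemma 3: the modulus of the characteristic function is bounded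
by exp(-(1/2) ∑_{k=1}^n b_k e^{-kδ} sin²(παk)). -/
theorem selections_char_fun_bound (n : ℕ) (hn : 1 ≤ n) (δ : ℝ) (hδ : 0 < δ)
    (b : ℕ → ℝ) (hb : ∀ k, 1 ≤ k → k ≤ n → 0 ≤ b k) (α : ℝ) :
    ∏ k ∈ Finset.Icc 1 n,
        (‖1 + Complex.exp (-(↑δ + 2 * ↑π * I * ↑α) * k)‖ /
          (1 + Real.exp (-δ * k))) ^ (b k) ≤
      Real.exp (-(1 / 2) *
        ∑ k ∈ Finset.Icc 1 n, b k * Real.exp (-(k : ℝ) * δ) * Real.sin (π * α * k) ^ 2) := by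
  have step1 : ∏ k ∈ Finset.Icc 1 n,
      (‖1 + Complex.exp (-(↑δ + 2 * ↑π * I * ↑α) * k)‖ /
        (1 + Real.exp (-δ * k))) ^ (b k) ≤
      ∏ k ∈ Finset.Icc 1 n,
        Real.exp (-(1/2) * (Real.exp (-(k:ℝ) * δ) * Real.sin (π * α * k) ^ 2)) ^ (b k) := by
    apply Finset.prod_le_prod
    · intro k _
      apply Real.rpow_nonneg
      positivity
    · intro k hk
      rw [Finset.mem_Icc] at hk
      exact Real.rpow_le_rpow (by positivity) (key_factor δ hδ α k hk.1) (hb k hk.1 hk.2)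
  refine step1.trans (le_of_eq ?_)
  have : ∀ k ∈ Finset.Icc 1 n,
      Real.exp (-(1/2) * (Real.exp (-(k:ℝ) * δ) * Real.sin (π * α * k) ^ 2)) ^ (b k) =
      Real.exp (-(1/2) * (b k * Real.exp (-(k:ℝ) * δ) * Real.sin (π * α * k) ^ 2)) := by
    intro k _
    rw [← Real.exp_mul]
    congr 1
    ring
  rw [Finset.prod_congr rfl this, ← Real.exp_sum]
  congr 1
  rw [Finset.mul_sum]
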